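/- Let E be a real Banach space, f : E → E continuous, y₀ ∈ E, h > 0, s ≥ 1. Let F : ℝ → ℝ → E → E, Φ : ℝ × ℝ → L(E, E) continuous, and σ : ℝ → E continuously differentiable with σ(0) = y₀, and set y(t) := F t 0 y₀. Define γ_j(σ) = ∫_0^1 P_j(τ) f(σ(τh)) dτ for j ≥ 0. Assume: (i) F t̄ t̄ η = η for all t̄ ∈ [0,h], η ∈ E; (ii) for every t̄ ∈ [0,h] and t ∈ [0, t̄], the joint map (ξ, η) ↦ F t̄ ξ η has at (t, σ(t)) the Fréchet derivative (δξ, δη) ↦ −Φ(t̄, t)(f(σ(t))) δξ + Φ(t̄, t)(δη); (iii) σ(ch) = y₀ + h Σ_{j=0}^{s−1} (∫_0^c P_j(x) dx) γ_j(σ) for all c ∈ [0,1]; (iv) the series Σ_{j=0}^∞ P_j(τ) γ_j(σ) converges uniformly on [0,1] to f(σ(τh)); (v) there exist κ > 0 and ρ > 1 with ‖γ_j(σ)‖ ≤ κ √(2j+1) ρ^{−j} for all j ≥ 0; (vi) ‖Φ(t₁, t₂)‖ ≤ ν for all t₁, t₂ ∈ [0, h]. Then for every c ∈ [0,1], ‖σ(ch)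 − y(ch)‖ ≤ c h ν κ Σ_{j=s}^∞ (2j+1) ρ^{−j}. -/

import Mathlib

/-- The shifted and scaled Legendre polynomial on `[0,1]`, via Rodrigues' formula:
`P_j(x) = (√(2j+1)/j!) (d/dx)^j [(x² - x)^j]`. -/
noncomputable def legendreP (j : ℕ) : ℝ → ℝ :=
  fun x => (Real.sqrt (2 * (j : ℝ) + 1) / (Nat.factorial j : ℝ)) *
    iteratedDeriv j (fun y : ℝ => (y ^ 2 - y) ^ j) x

section LegendreAux
open Polynomial

lemma iteratedDeriv_polyeval (p : ℝ[X]) (k : ℕ) :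
    iteratedDeriv k (fun x => p.eval x) = fun x => (derivative^[k] p).eval x := by
  induction k with
  | zero => simp
  | succ k ih =>
    rw [iteratedDeriv_succ, ih, Function.iterate_succ_apply']
    funext x
    exact Polynomial.deriv _

lemma legendreP_eq (j : ℕ) : legendreP j = fun x =>
    (Real.sqrt (2 * (j : ℝ) + 1) / (Nat.factorial j : ℝ)) *
      (derivative^[j] ((X^2 - X : ℝ[X])^j)).eval x := by
  have : (fun y : ℝ => (y ^ 2 - y) ^ j) = fun x => ((X^2 - X : ℝ[X])^j).eval x := by
    funext x; simp
  unfold legendreP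
  rw [this, iteratedDeriv_polyeval]

lemma legendreP_continuous (j : ℕ) : Continuous (legendreP j) := by
  rw [legendreP_eq]; exact continuous_const.mul (Polynomial.continuous _)

lemma legA0 (m : ℕ) :
    (X^2 - X : ℝ[X]) * derivative ((X^2 - X : ℝ[X])^(m+1)) =
      C ((m+1 : ℕ) : ℝ) * ((2*X - 1) * (X^2 - X : ℝ[X])^(m+1)) := by
  rw [derivative_pow]
  simp only [Nat.add_sub_cancel, derivative_sub, derivative_X_pow, derivative_X,
    map_add, map_sub, map_mul, map_one, map_ofNat, map_natCast, Nat.cast_ofNat, pow_one]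
  push_cast
  ring

lemma legA (m : ℕ) : ∀ k : ℕ,
    (X^2 - X : ℝ[X]) * derivative^[k+2] ((X^2 - X : ℝ[X])^(m+1)) =
      C (((m+1 : ℕ) : ℝ) - (k+1)) * ((2*X - 1) * derivative^[k+1] ((X^2 - X : ℝ[X])^(m+1)))
      + C (((k:ℝ)+1) * (2*((m+1:ℕ):ℝ) - k)) * derivative^[k] ((X^2 - X : ℝ[X])^(m+1)) := by
  intro k
  induction k with
  | zero =>
    have h1 := congrArg derivative (legA0 m)
    rw [derivative_mul, derivative_mul] at h1
    simp only [derivative_sub, derivative_X_pow, derivative_X, derivative_C, derivative_one, derivative_natCast, derivative_add,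
      derivative_mul, derivative_ofNat, Nat.cast_ofNat, zero_mul, zero_add, pow_one,
      map_add, map_sub, map_mul, map_one, map_ofNat, map_natCast] at h1 ⊢
    simp only [Function.iterate_succ_apply', Function.iterate_zero_apply, Function.iterate_one]
    push_cast at h1 ⊢
    linear_combination h1
  | succ k ih =>
    have h1 := congrArg derivative ih
    rw [derivative_mul, derivative_add, derivative_mul, derivative_mul] at h1
    simp only [derivative_sub, derivative_X_pow, derivative_X, derivative_C, derivative_one, derivative_natCast, derivative_add,
      derivative_mul, derivative_ofNat, Nat.cast_ofNat, zero_mul, zero_add, pow_one,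
      ← Function.iterate_succ_apply' derivative,
      map_add, map_sub, map_mul, map_one, map_ofNat, map_natCast, Nat.succ_eq_add_one] at h1 ⊢
    push_cast at h1 ⊢
    linear_combination h1

lemma mirror_iterate (k : ℕ) (p : ℝ[X]) :
    derivative^[k] (p.comp (1 - X)) = (-1)^k * (derivative^[k] p).comp (1 - X) := by
  induction k generalizing p with
  | zero => simp
  | succ k ih =>
    rw [Function.iterate_succ_apply, Function.iterate_succ_apply, derivative_comp]
    simp only [derivative_sub, derivative_one, derivative_X, zero_sub]
    rw [show (-1 : ℝ[X]) * (derivative p).comp (1 - X) = (-(derivative p)).comp (1-X) by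
      simp [neg_comp]]
    rw [ih]
    rw [Polynomial.iterate_derivative_neg, neg_comp]
    ring

lemma u_mirror (n : ℕ) : ((X^2 - X : ℝ[X])^n).comp (1 - X) = (X^2 - X : ℝ[X])^n := by
  rw [pow_comp]
  congr 1
  simp [sub_comp, pow_comp, X_comp, one_comp]
  ring

lemma q_eval_zero (n : ℕ) :
    (derivative^[n] ((X^2 - X : ℝ[X])^n)).eval 0 = (-1)^n * (Nat.factorial n : ℝ) := by
  rw [← Polynomial.coeff_zero_eq_eval_zero, Polynomial.coeff_iterate_derivative]
  rw [zero_add, Nat.descFactorial_self]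
  have h2 : ((X^2 - X : ℝ[X])^n) = X^n * ((X - 1)^n) := by
    rw [← mul_pow]; congr 1; ring
  have h3 : ((X^2 - X : ℝ[X])^n).coeff n = ((X - 1 : ℝ[X])^n).coeff 0 := by
    rw [h2]
    have := Polynomial.coeff_X_pow_mul ((X - 1 : ℝ[X])^n) n 0
    rwa [zero_add] at this
  rw [h3, Polynomial.coeff_zero_eq_eval_zero]
  simp [smul_eq_mul]
  ring

lemma q_eval_one (n : ℕ) :
    (derivative^[n] ((X^2 - X : ℝ[X])^n)).eval 1 = (Nat.factorial n : ℝ) := by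
  have h1 : derivative^[n] ((X^2 - X : ℝ[X])^n)
      = (-1)^n * (derivative^[n] ((X^2 - X : ℝ[X])^n)).comp (1 - X) := by
    conv_lhs => rw [← u_mirror n]
    exact mirror_iterate n _
  have h2 := congrArg (Polynomial.eval (1:ℝ)) h1
  rw [eval_mul, eval_comp] at h2
  simp only [eval_pow, eval_neg, eval_one, eval_sub, eval_X, sub_self] at h2
  rw [h2, q_eval_zero]
  rw [← mul_assoc, ← mul_pow]
  simp

lemma q_abs_le (m : ℕ) : ∀ x ∈ Set.Icc (0:ℝ) 1,
    |(derivative^[m+1] ((X^2 - X : ℝ[X])^(m+1))).eval x| ≤ (Nat.factorial (m+1) : ℝ) := by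
  intro x hx
  set n : ℕ := m + 1 with hn
  set p : ℝ[X] := derivative^[n] ((X^2 - X : ℝ[X])^n) with hp
  set nn : ℝ := ((m:ℝ)+1) * ((m:ℝ)+2) with hnn
  have hnn0 : 0 < nn := by positivity
  -- the ODE, pointwise
  have ode : ∀ t : ℝ, (t^2 - t) * (derivative (derivative p)).eval t
      = -((2*t-1) * (derivative p).eval t) + nn * p.eval t := by
    intro t
    have h := congrArg (Polynomial.eval t) (legA m (m+1))
    simp only [eval_mul, eval_add, eval_sub, eval_pow, eval_C, eval_X, eval_ofNat,
      eval_one, Nat.cast_add, Nat.cast_one] at h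
    have e2 : derivative^[m+1+1] ((X^2 - X : ℝ[X])^(m+1)) = derivative p := by
      rw [hp, hn, Function.iterate_succ_apply']
    have e3 : derivative^[m+1+2] ((X^2 - X : ℝ[X])^(m+1)) = derivative (derivative p) := by
      rw [hp, hn, show m+1+2 = (m+1+1)+1 by ring, Function.iterate_succ_apply', e2]
    rw [e2, e3, ← hp] at h
    push_cast at h
    rw [hnn]
    linarith [h]
  set g : ℝ → ℝ := fun t => (p.eval t)^2 + (t - t^2) * ((derivative p).eval t)^2 / nn with hg
  have hgd : ∀ t : ℝ, HasDerivAt g ((2*t-1) * ((derivative p).eval t)^2 / nn) t := by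
    intro t
    have h1 : HasDerivAt (fun t : ℝ => (p.eval t)^2)
        (2 * p.eval t * (derivative p).eval t) t := by
      simpa using (p.hasDerivAt t).fun_pow 2
    have h2 : HasDerivAt (fun t : ℝ => t - t^2) (1 - 2*t) t := by
      simpa using (hasDerivAt_id' t).fun_sub (hasDerivAt_pow 2 t)
    have h3 : HasDerivAt (fun t : ℝ => ((derivative p).eval t)^2)
        (2 * (derivative p).eval t * (derivative (derivative p)).eval t) t := by
      simpa using ((derivative p).hasDerivAt t).fun_pow 2
    have h4 := h1.fun_add ((h2.fun_mul h3).div_const nn)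
    refine h4.congr_deriv (Eq.symm ?_)
    have h5 := ode t
    field_simp
    linear_combination (2 * (derivative p).eval t) * h5
  have hcont : Continuous g := by
    have : Differentiable ℝ g := fun t => (hgd t).differentiableAt
    exact this.continuous
  have hmono : MonotoneOn g (Set.Icc (1/2 : ℝ) 1) := by
    apply monotoneOn_of_deriv_nonneg (convex_Icc _ _) hcont.continuousOn
    · intro t ht
      exact ((hgd t).differentiableAt).differentiableWithinAt
    · intro t ht
      rw [interior_Icc] at ht
      rw [(hgd t).deriv]
      have : 0 ≤ 2*t - 1 := by linarith [ht.1]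
      positivity
  have hanti : AntitoneOn g (Set.Icc (0:ℝ) (1/2)) := by
    apply antitoneOn_of_deriv_nonpos (convex_Icc _ _) hcont.continuousOn
    · intro t ht
      exact ((hgd t).differentiableAt).differentiableWithinAt
    · intro t ht
      rw [interior_Icc] at ht
      rw [(hgd t).deriv]
      have h1 : 2*t - 1 ≤ 0 := by linarith [ht.2]
      have h2 : (0:ℝ) ≤ ((derivative p).eval t)^2 := sq_nonneg _
      have := mul_nonpos_of_nonpos_of_nonneg h1 h2
      exact div_nonpos_of_nonpos_of_nonneg this hnn0.le
  have e1 : p.eval 1 = (Nat.factorial n : ℝ) := q_eval_one n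
  have e0 : p.eval 0 = (-1)^n * (Nat.factorial n : ℝ) := q_eval_zero n
  have e00 : ((-1:ℝ)^n)^2 = 1 := by
    rw [← pow_mul, mul_comm, pow_mul]; norm_num
  have hg1 : g 1 = ((Nat.factorial n : ℝ))^2 := by
    simp only [hg]; rw [e1]; ring
  have hg0 : g 0 = ((Nat.factorial n : ℝ))^2 := by
    simp only [hg]; rw [e0, mul_pow, e00]; ring
  have hgle : g x ≤ ((Nat.factorial n : ℝ))^2 := by
    rcases le_or_gt x (1/2) with hc | hc
    · have := hanti (Set.mem_Icc.mpr ⟨le_refl 0, by norm_num⟩)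
        (Set.mem_Icc.mpr ⟨hx.1, hc⟩) hx.1
      rw [hg0] at this; exact this
    · have := hmono (Set.mem_Icc.mpr ⟨hc.le, hx.2⟩)
        (Set.mem_Icc.mpr ⟨by norm_num, le_refl 1⟩) hx.2
      rw [hg1] at this; exact this
  have hq2 : (p.eval x)^2 ≤ g x := by
    rw [hg]
    have h1 : 0 ≤ x - x^2 := by nlinarith [hx.1, hx.2]
    have h2 : 0 ≤ (x - x^2) * ((derivative p).eval x)^2 / nn := by positivity
    linarith
  have : (p.eval x)^2 ≤ ((Nat.factorial n : ℝ))^2 := le_trans hq2 hgle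
  have hfpos : (0:ℝ) < (Nat.factorial n : ℝ) := by positivity
  nlinarith [abs_nonneg (p.eval x), sq_abs (p.eval x)]

lemma legendreP_bound (j : ℕ) {x : ℝ} (hx : x ∈ Set.Icc (0:ℝ) 1) :
    |legendreP j x| ≤ Real.sqrt (2 * (j : ℝ) + 1) := by
  have hs : (0:ℝ) ≤ Real.sqrt (2 * (j : ℝ) + 1) := Real.sqrt_nonneg _
  cases j with
  | zero =>
    simp [legendreP, iteratedDeriv_zero]
  | succ m =>
    rw [legendreP_eq]
    rw [abs_mul]
    have hfac : (0:ℝ) < (Nat.factorial (m+1) : ℝ) := by positivity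
    rw [abs_of_nonneg (by positivity : (0:ℝ) ≤ Real.sqrt (2 * ((m+1:ℕ) : ℝ) + 1) / (Nat.factorial (m+1) : ℝ))]
    calc Real.sqrt (2 * ((m+1:ℕ) : ℝ) + 1) / (Nat.factorial (m+1) : ℝ) *
          |(derivative^[m+1] ((X^2 - X : ℝ[X])^(m+1))).eval x|
        ≤ Real.sqrt (2 * ((m+1:ℕ) : ℝ) + 1) / (Nat.factorial (m+1) : ℝ) * (Nat.factorial (m+1) : ℝ) := by
          apply mul_le_mul_of_nonneg_left (q_abs_le m x hx) (by positivity)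
      _ = Real.sqrt (2 * ((m+1:ℕ) : ℝ) + 1) := by field_simp

end LegendreAux

/-- First statement of Theorem 2.6 (uniform accuracy of the polynomial approximation `σ`
on `[0, h]`): under the perturbation hypotheses on the solution map `F` and the
variational propagator `Φ`, if `σ` is the degree-`s` polynomial approximation obtained by
truncating the Legendre expansion of the vector field, whose Fourier coefficients satisfy
`‖γ_j(σ)‖ ≤ κ √(2j+1) ρ^{-j}`, and `‖Φ‖ ≤ ν` on `[0,h]²`, then for every `c ∈ [0,1]`
`‖σ(ch) - y(ch)‖ ≤ c h ν κ Σ_{j=s}^∞ (2j+1) ρ^{-j}`. -/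
theorem shbvm_uniform_error_bound
    {E : Type*} [NormedAddCommGroup E] [NormedSpace ℝ E] [CompleteSpace E]
    (f : E → E) (hf : Continuous f) (y₀ : E) (h : ℝ) (hh : 0 < h) (s : ℕ) (hs : 1 ≤ s)
    (F : ℝ → ℝ → E → E) (Φ : ℝ × ℝ → E →L[ℝ] E) (hΦ : Continuous Φ)
    (σ : ℝ → E) (hσ : ContDiff ℝ 1 σ) (hσ0 : σ 0 = y₀)
    (y : ℝ → E) (hy : ∀ t, y t = F t 0 y₀)
    (γ : ℕ → E) (hγ : ∀ j : ℕ, γ j = ∫ τ in (0:ℝ)..1, legendreP j τ • f (σ (τ * h)))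
    (hFid : ∀ tb ∈ Set.Icc (0:ℝ) h, ∀ η : E, F tb tb η = η)
    (hFderiv : ∀ tb ∈ Set.Icc (0:ℝ) h, ∀ t ∈ Set.Icc (0:ℝ) tb,
      HasFDerivAt (fun p : ℝ × E => F tb p.1 p.2)
        ((Φ (tb, t)).comp (ContinuousLinearMap.snd ℝ ℝ E) -
          (ContinuousLinearMap.fst ℝ ℝ E).smulRight (Φ (tb, t) (f (σ t))))
        (t, σ t))
    (hσeq : ∀ c ∈ Set.Icc (0:ℝ) 1,
      σ (c * h) = y₀ + h • ∑ j ∈ Finset.range s, (∫ x in (0:ℝ)..c, legendreP j x) • γ j)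
    (hunif : TendstoUniformlyOn
      (fun n : ℕ => fun τ : ℝ => ∑ j ∈ Finset.range n, legendreP j τ • γ j)
      (fun τ : ℝ => f (σ (τ * h))) Filter.atTop (Set.Icc (0:ℝ) 1))
    (κ ρ : ℝ) (hκ : 0 < κ) (hρ : 1 < ρ)
    (hγbound : ∀ j : ℕ, ‖γ j‖ ≤ κ * Real.sqrt (2 * (j : ℝ) + 1) / ρ ^ j)
    (ν : ℝ) (hν : ∀ t₁ ∈ Set.Icc (0:ℝ) h, ∀ t₂ ∈ Set.Icc (0:ℝ) h, ‖Φ (t₁, t₂)‖ ≤ ν) :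
    ∀ c ∈ Set.Icc (0:ℝ) 1,
      ‖σ (c * h) - y (c * h)‖ ≤
        c * h * ν * κ * ∑' j : ℕ, (2 * ((s : ℝ) + j) + 1) / ρ ^ (s + j) := by
  intro c hc
  obtain ⟨hc0, hc1⟩ := hc
  have hne : h ≠ 0 := ne_of_gt hh
  have hρ0 : (0:ℝ) < ρ := lt_trans one_pos hρ
  set T : ℝ := ∑' j : ℕ, (2 * ((s : ℝ) + j) + 1) / ρ ^ (s + j) with hT
  -- summability
  have hρinv : ‖ρ⁻¹‖ < 1 := by
    rw [Real.norm_eq_abs, abs_of_pos (inv_pos.mpr hρ0)]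
    exact inv_lt_one_of_one_lt₀ hρ
  have hb : Summable (fun j : ℕ => (2*(j:ℝ)+1) / ρ^j) := by
    have h1 : Summable (fun j : ℕ => (j:ℝ) * ρ⁻¹^j) := by
      simpa using summable_pow_mul_geometric_of_norm_lt_one 1 hρinv
    have h2 : Summable (fun j : ℕ => ρ⁻¹^j) := summable_geometric_of_norm_lt_one hρinv
    have := (h1.mul_left 2).add h2
    apply this.congr
    intro j
    rw [inv_pow]
    field_simp
  have hTsum : Summable (fun j : ℕ => (2*((s:ℝ)+j)+1) / ρ^(s+j)) := by
    have := (summable_nat_add_iff s).mpr hb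
    apply this.congr
    intro j
    rw [add_comm j s]
    push_cast
    ring_nf
  have hbnn : ∀ j : ℕ, 0 ≤ (2*(j:ℝ)+1) / ρ^j := by
    intro j; positivity
  have hT0 : 0 ≤ T := tsum_nonneg (fun j => by positivity)
  have htail : ∀ n : ℕ, (∑ j ∈ Finset.Ico s n, (2*(j:ℝ)+1)/ρ^j) ≤ T := by
    intro n
    rw [Finset.sum_Ico_eq_sum_range]
    have heq : ∀ i : ℕ, (2*((s+i : ℕ):ℝ)+1)/ρ^(s+i) = (2*((s:ℝ)+i)+1)/ρ^(s+i) := by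
      intro i; push_cast; ring_nf
    calc (∑ i ∈ Finset.range (n - s), (2*((s+i : ℕ):ℝ)+1)/ρ^(s+i))
        = ∑ i ∈ Finset.range (n - s), (2*((s:ℝ)+i)+1)/ρ^(s+i) := by
          apply Finset.sum_congr rfl; intro i _; exact heq i
      _ ≤ T := Summable.sum_le_tsum _ (fun i _ => by positivity) hTsum
  -- defect bound
  have hdef : ∀ τ ∈ Set.Icc (0:ℝ) 1,
      ‖(∑ j ∈ Finset.range s, legendreP j τ • γ j) - f (σ (τ * h))‖ ≤ κ * T := by
    intro τ hτ
    have hlim := hunif.tendsto_at hτ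
    have hlim2 : Filter.Tendsto
        (fun n : ℕ => ‖(∑ j ∈ Finset.range s, legendreP j τ • γ j)
          - (∑ j ∈ Finset.range n, legendreP j τ • γ j)‖) Filter.atTop
        (nhds ‖(∑ j ∈ Finset.range s, legendreP j τ • γ j) - f (σ (τ * h))‖) :=
      (Filter.Tendsto.sub tendsto_const_nhds hlim).norm
    apply le_of_tendsto hlim2
    filter_upwards [Filter.eventually_ge_atTop s] with n hn
    have hsplit : (∑ j ∈ Finset.range n, legendreP j τ • γ j)
        - (∑ j ∈ Finset.range s, legendreP j τ • γ j)
        = ∑ j ∈ Finset.Ico s n, legendreP j τ • γ j := by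
      rw [Finset.sum_Ico_eq_sub _ hn]
    rw [norm_sub_rev, hsplit]
    calc ‖∑ j ∈ Finset.Ico s n, legendreP j τ • γ j‖
        ≤ ∑ j ∈ Finset.Ico s n, ‖legendreP j τ • γ j‖ := norm_sum_le _ _
      _ ≤ ∑ j ∈ Finset.Ico s n, κ * ((2*(j:ℝ)+1)/ρ^j) := by
          apply Finset.sum_le_sum
          intro j _
          rw [norm_smul, Real.norm_eq_abs]
          have h1 : |legendreP j τ| ≤ Real.sqrt (2*(j:ℝ)+1) := legendreP_bound j hτ
          have h2 : ‖γ j‖ ≤ κ * Real.sqrt (2*(j:ℝ)+1) / ρ^j := hγbound j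
          have h3 : (0:ℝ) ≤ 2*(j:ℝ)+1 := by positivity
          calc |legendreP j τ| * ‖γ j‖
              ≤ Real.sqrt (2*(j:ℝ)+1) * (κ * Real.sqrt (2*(j:ℝ)+1) / ρ^j) := by
                apply mul_le_mul h1 h2 (norm_nonneg _) (Real.sqrt_nonneg _)
            _ = κ * ((2*(j:ℝ)+1)/ρ^j) := by
                rw [div_eq_mul_inv, div_eq_mul_inv, ← mul_assoc]
                rw [show Real.sqrt (2*(j:ℝ)+1) * (κ * Real.sqrt (2*(j:ℝ)+1))
                  = κ * (Real.sqrt (2*(j:ℝ)+1) * Real.sqrt (2*(j:ℝ)+1)) by ring]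
                rw [Real.mul_self_sqrt h3, mul_assoc]
      _ = κ * ∑ j ∈ Finset.Ico s n, (2*(j:ℝ)+1)/ρ^j := by rw [Finset.mul_sum]
      _ ≤ κ * T := mul_le_mul_of_nonneg_left (htail n) hκ.le
  -- set up on [0, c*h]
  have hch0 : 0 ≤ c * h := mul_nonneg hc0 hh.le
  have hchh : c * h ≤ h := by nlinarith
  have hchmem : c * h ∈ Set.Icc (0:ℝ) h := ⟨hch0, hchh⟩
  set ψd : ℝ → E := fun t => ∑ j ∈ Finset.range s, legendreP j (t/h) • γ j with hψd
  -- σ agrees with the explicit polynomial formula on [0, c*h]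
  have hσΨ : ∀ t ∈ Set.Icc (0:ℝ) (c*h),
      σ t = y₀ + h • ∑ j ∈ Finset.range s, (∫ x in (0:ℝ)..(t/h), legendreP j x) • γ j := by
    intro t ht
    have hth : t / h ∈ Set.Icc (0:ℝ) 1 := by
      constructor
      · exact div_nonneg ht.1 hh.le
      · rw [div_le_one hh]; exact le_trans ht.2 hchh
    have := hσeq (t/h) hth
    rwa [div_mul_cancel₀ _ hne] at this
  -- derivative of σ within [0, c*h]
  have hσd : ∀ t ∈ Set.Icc (0:ℝ) (c*h),
      HasDerivWithinAt σ (ψd t) (Set.Icc (0:ℝ) (c*h)) t := by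
    intro t ht
    have hsum : HasDerivAt
        (fun t : ℝ => ∑ j ∈ Finset.range s, (∫ x in (0:ℝ)..(t/h), legendreP j x) • γ j)
        (∑ j ∈ Finset.range s, (legendreP j (t/h) * (1/h)) • γ j) t := by
      apply HasDerivAt.fun_sum
      intro j _
      have hI : HasDerivAt (fun u : ℝ => ∫ x in (0:ℝ)..u, legendreP j x)
          (legendreP j (t/h)) (t/h) :=
        ((legendreP_continuous j).integral_hasStrictDerivAt 0 (t/h)).hasDerivAt
      have hin : HasDerivAt (fun t : ℝ => t/h) (1/h) t := by
        simpa using (hasDerivAt_id t).div_const h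
      exact (hI.comp t hin).smul_const (γ j)
    have hΨ : HasDerivAt
        (fun t : ℝ => y₀ + h • ∑ j ∈ Finset.range s, (∫ x in (0:ℝ)..(t/h), legendreP j x) • γ j)
        (ψd t) t := by
      have h5 := (hsum.fun_const_smul h).const_add y₀
      convert h5 using 1
      rw [hψd, Finset.smul_sum]
      apply Finset.sum_congr rfl
      intro j _
      rw [smul_smul]
      congr 1
      field_simp
    exact (hΨ.hasDerivWithinAt).congr hσΨ (hσΨ t ht)
  -- derivative of t ↦ F (c*h) t (σ t)
  set g : ℝ → E := fun t => F (c*h) t (σ t) with hg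
  have hgd : ∀ t ∈ Set.Icc (0:ℝ) (c*h),
      HasDerivWithinAt g ((Φ (c*h, t)) (ψd t - f (σ t))) (Set.Icc (0:ℝ) (c*h)) t := by
    intro t ht
    have hpair : HasDerivWithinAt (fun t : ℝ => (t, σ t)) ((1:ℝ), ψd t)
        (Set.Icc (0:ℝ) (c*h)) t :=
      (hasDerivWithinAt_id t _).prodMk (hσd t ht)
    have hF := hFderiv (c*h) hchmem t ht
    have hcomp := hF.comp_hasDerivWithinAt t hpair
    convert hcomp using 1
    · rfl
    simp only [ContinuousLinearMap.sub_apply, ContinuousLinearMap.comp_apply,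
      ContinuousLinearMap.coe_snd', ContinuousLinearMap.coe_fst',
      ContinuousLinearMap.smulRight_apply, one_smul, map_sub]
  -- bound on the derivative
  have hν0 : 0 ≤ ν := le_trans (norm_nonneg _) (hν 0 ⟨le_refl 0, hh.le⟩ 0 ⟨le_refl 0, hh.le⟩)
  have hbound : ∀ t ∈ Set.Icc (0:ℝ) (c*h),
      ‖(Φ (c*h, t)) (ψd t - f (σ t))‖ ≤ ν * (κ * T) := by
    intro t ht
    have hth : t / h ∈ Set.Icc (0:ℝ) 1 := by
      constructor
      · exact div_nonneg ht.1 hh.le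
      · rw [div_le_one hh]; exact le_trans ht.2 hchh
    have htmem : t ∈ Set.Icc (0:ℝ) h := ⟨ht.1, le_trans ht.2 hchh⟩
    have hd : ‖ψd t - f (σ t)‖ ≤ κ * T := by
      have := hdef (t/h) hth
      rwa [div_mul_cancel₀ _ hne] at this
    calc ‖(Φ (c*h, t)) (ψd t - f (σ t))‖
        ≤ ‖Φ (c*h, t)‖ * ‖ψd t - f (σ t)‖ := ContinuousLinearMap.le_opNorm _ _
      _ ≤ ν * (κ * T) := by
          apply mul_le_mul (hν (c*h) hchmem t htmem) hd (norm_nonneg _) hν0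
  -- mean value inequality
  have hmvt := (convex_Icc (0:ℝ) (c*h)).norm_image_sub_le_of_norm_hasDerivWithin_le
    hgd hbound ⟨le_refl 0, hch0⟩ ⟨hch0, le_refl (c*h)⟩
  -- identify endpoints
  have hgch : g (c*h) = σ (c*h) := hFid (c*h) hchmem (σ (c*h))
  have hg0 : g 0 = y (c*h) := by
    rw [hg]
    simp only [hσ0]
    rw [hy]
  rw [hgch, hg0, sub_zero, Real.norm_eq_abs, abs_of_nonneg hch0] at hmvt
  calc ‖σ (c * h) - y (c * h)‖ ≤ ν * (κ * T) * (c * h) := hmvt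
    _ = c * h * ν * κ * T := by ring
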